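/- Let R be a right noetherian ring with right Krull dimension α, and let T be an ideal of R with |R/T|_r = α that is right weakly ideal invariant. Let I ⊆ L be right ideals of R such that L/I is an essential submodule of R/I, L/I is α-Krull-homogeneous, |R/L|_r < α, and LT ⊆ I. Then T ⊆ I, i.e., (R/I)T = 0. -/

import Mathlib

universe u

/-- Gabriel–Rentschler deviation: `M` has Krull dimension `≤ α`: every descending chain of
submodules has all but finitely many factors of Krull dimension `< α`. -/
def KdimLE (R : Type u) [Ring R] (α : Ordinal.{u}) (M : Type u)
    [AddCommGroup M] [Module R M] : Prop :=
  ∀ f : ℕ → Submodule R M, (∀ n, f (n + 1) ≤ f n) →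
    ∃ N : ℕ, ∀ n ≥ N, f n = f (n + 1) ∨
      ∃ β : {γ : Ordinal.{u} // γ < α},
        KdimLE R β.1 (↥(f n) ⧸ (f (n + 1)).comap (f n).subtype)
termination_by α
decreasing_by exact β.2

section
variable {R : Type u} [Ring R]

theorem kdimLE_of_injective : ∀ (α : Ordinal.{u}) {M N : Type u} [AddCommGroup M] [Module R M]
    [AddCommGroup N] [Module R N] (f : M →ₗ[R] N), Function.Injective f →
    KdimLE R α N → KdimLE R α M := by
  intro α
  induction α using Ordinal.induction with
  | h α IH =>
    intro M N _ _ _ _ f hf hN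
    rw [KdimLE] at hN ⊢
    intro g hg
    obtain ⟨N₀, hN₀⟩ := hN (fun n => (g n).map f) (fun n => Submodule.map_mono (hg n))
    refine ⟨N₀, fun n hn => ?_⟩
    rcases hN₀ n hn with h | ⟨⟨β, hβ⟩, hfac⟩
    · exact Or.inl (Submodule.map_injective_of_injective hf h)
    · refine Or.inr ⟨⟨β, hβ⟩, ?_⟩
      set A := g n
      set B := g (n + 1)
      have hle : B.comap A.subtype ≤
          ((B.map f).comap (A.map f).subtype).comap
            (Submodule.equivMapOfInjective f hf A).toLinearMap := by
        intro x hx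
        simp only [Submodule.mem_comap, LinearEquiv.coe_coe] at hx ⊢
        exact ⟨x.1, hx, (Submodule.coe_equivMapOfInjective_apply f hf A x).symm⟩
      refine IH β hβ (Submodule.mapQ _ _ _ hle) ?_ hfac
      rw [← LinearMap.ker_eq_bot, Submodule.mapQ, Submodule.ker_liftQ_eq_bot]
      intro x hx
      simp only [LinearMap.mem_ker, LinearMap.coe_comp, Function.comp_apply,
        LinearEquiv.coe_coe, Submodule.mkQ_apply, Submodule.Quotient.mk_eq_zero,
        Submodule.mem_comap] at hx
      have : (f x : N) ∈ B.map f := by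
        simpa [Submodule.coe_equivMapOfInjective_apply] using hx
      obtain ⟨b, hb, hfb⟩ := this
      exact Submodule.mem_comap.mpr (show ((x : M) ∈ B) from hf hfb ▸ hb)

theorem kdimLE_of_surjective : ∀ (α : Ordinal.{u}) {M N : Type u} [AddCommGroup M] [Module R M]
    [AddCommGroup N] [Module R N] (f : M →ₗ[R] N), Function.Surjective f →
    KdimLE R α M → KdimLE R α N := by
  intro α M N _ _ _ _ f hf hM
  rw [KdimLE] at hM ⊢
  intro g hg
  obtain ⟨N₀, hN₀⟩ := hM (fun n => (g n).comap f) (fun n => Submodule.comap_mono (hg n))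
  refine ⟨N₀, fun n hn => ?_⟩
  rcases hN₀ n hn with h | ⟨⟨β, hβ⟩, hfac⟩
  · exact Or.inl (Submodule.comap_injective_of_surjective hf h)
  · refine Or.inr ⟨⟨β, hβ⟩, ?_⟩
    set A := g n
    set B := g (n + 1)
    -- ψ : ↥(A.comap f) →ₗ ↥A
    have hres : ∀ x ∈ A.comap f, f x ∈ A := fun x hx => hx
    set ψ : ↥(A.comap f) →ₗ[R] ↥A := f.restrict hres with hψ
    have hle : (B.comap f).comap (A.comap f).subtype ≤
        (B.comap A.subtype).comap ψ := fun x hx => hx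
    set φ := Submodule.mapQ _ _ ψ hle with hφ
    have hinj : Function.Injective φ := by
      rw [← LinearMap.ker_eq_bot, hφ, Submodule.mapQ, Submodule.ker_liftQ_eq_bot]
      intro x hx
      simp only [LinearMap.mem_ker, LinearMap.coe_comp, Function.comp_apply,
        Submodule.mkQ_apply, Submodule.Quotient.mk_eq_zero, Submodule.mem_comap] at hx ⊢
      exact hx
    have hsurj : Function.Surjective φ := by
      rw [hφ]
      intro y
      obtain ⟨a, rfl⟩ := Submodule.mkQ_surjective _ y
      obtain ⟨m, hm⟩ := hf a.1
      refine ⟨Submodule.mkQ _ ⟨m, by simp [Submodule.mem_comap, hm]⟩, ?_⟩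
      simp only [Submodule.mkQ_apply, Submodule.mapQ_apply]
      congr 1
      ext
      simp [ψ, LinearMap.restrict_apply, hm]
    exact kdimLE_of_injective β (LinearEquiv.ofBijective φ ⟨hinj, hsurj⟩).symm.toLinearMap
      (LinearEquiv.injective _) hfac

end

open Classical in
/-- The Gabriel–Rentschler Krull dimension of a module (`⊥` for the zero module).
For a right module take `R := Sᵐᵒᵖ`. -/
noncomputable def kdim (R : Type u) [Ring R] (M : Type u)
    [AddCommGroup M] [Module R M] : WithBot Ordinal.{u} :=
  if Subsingleton M then ⊥ else ↑(sInf {α : Ordinal.{u} | KdimLE R α M})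


theorem kdim_eq_of_not_subsingleton {R M : Type u} [Ring R] [AddCommGroup M] [Module R M]
    (h : ¬ Subsingleton M) : kdim R M = ↑(sInf {α : Ordinal.{u} | KdimLE R α M}) := by
  rw [kdim, if_neg h]

/-- `M` is a Krull-homogeneous `R`-module of Krull dimension `α`:
every nonzero submodule has Krull dimension `α`. -/
def IsKrullHomogeneous (R : Type u) [Ring R] (M : Type u) [AddCommGroup M]
    [Module R M] (α : WithBot Ordinal.{u}) : Prop :=
  ∀ N : Submodule R M, N ≠ ⊥ → kdim R ↥N = α

namespace TwoSidedIdeal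

/-- The underlying right ideal of a two-sided ideal. -/
def rightIdeal {R : Type u} [Ring R] (P : TwoSidedIdeal R) :
    Submodule Rᵐᵒᵖ R where
  carrier := P
  add_mem' := P.add_mem
  zero_mem' := P.zero_mem
  smul_mem' := fun _ _ hx => P.mul_mem_right _ _ hx

/-- A two-sided ideal `P` is prime: `P ≠ R` and `aRb ⊆ P` implies `a ∈ P` or `b ∈ P`. -/
def IsPrime {R : Type u} [Ring R] (P : TwoSidedIdeal R) : Prop :=
  P ≠ ⊤ ∧ ∀ a b : R, (∀ r : R, a * r * b ∈ P) → a ∈ P ∨ b ∈ P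

/-- A two-sided ideal `P` is semiprime: `aRa ⊆ P` implies `a ∈ P`. -/
def IsSemiprime {R : Type u} [Ring R] (P : TwoSidedIdeal R) : Prop :=
  ∀ a : R, (∀ r : R, a * r * a ∈ P) → a ∈ P

/-- A minimal prime of `R`. -/
def IsMinimalPrime {R : Type u} [Ring R] (P : TwoSidedIdeal R) : Prop :=
  P.IsPrime ∧ ∀ Q : TwoSidedIdeal R, Q.IsPrime → Q ≤ P → Q = P

/-- `I ^ n = 0`, phrased as: every product of `n` elements of `I` vanishes. -/
def PowEqZero {R : Type u} [Ring R] (I : TwoSidedIdeal R) (n : ℕ) : Prop :=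
  ∀ f : Fin n → R, (∀ i, f i ∈ I) → (List.ofFn f).prod = 0

end TwoSidedIdeal

/-- The right ideal `L·T` generated by products `l * t`, `l ∈ L`, `t ∈ T`. -/
def mulSpan {R : Type u} [Ring R] (L : Submodule Rᵐᵒᵖ R) (T : TwoSidedIdeal R) :
    Submodule Rᵐᵒᵖ R :=
  Submodule.span Rᵐᵒᵖ {x : R | ∃ l ∈ L, ∃ t ∈ T, x = l * t}

/-- `c` is regular modulo `P`: its image in `R/P` is neither a left nor a right
zero divisor. -/
def IsRegularMod {R : Type u} [Ring R] (P : TwoSidedIdeal R) (c : R) : Prop :=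
  ∀ x : R, (c * x ∈ P → x ∈ P) ∧ (x * c ∈ P → x ∈ P)

/-- Lemma 2, cyclic case: if `T` is a right weakly ideal invariant ideal with
`|R/T|ᵣ = α = |R|ᵣ`, `I ≤ L` are right ideals with `L/I` essential in `R/I` and
`α`-Krull-homogeneous, `|R/L|ᵣ < α` and `LT ≤ I`, then `T ≤ I`. -/
theorem stmt2 {R : Type u} [Ring R] [IsNoetherian Rᵐᵒᵖ R]
    (α : WithBot Ordinal.{u}) (hR : kdim Rᵐᵒᵖ R = α)
    (T : TwoSidedIdeal R) (hT : kdim Rᵐᵒᵖ (R ⧸ T.rightIdeal) = α)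
    (hwii : ∀ L : Submodule Rᵐᵒᵖ R, kdim Rᵐᵒᵖ (R ⧸ L) < α →
      kdim Rᵐᵒᵖ (↥T.rightIdeal ⧸ (mulSpan L T).comap T.rightIdeal.subtype) < α)
    (I L : Submodule Rᵐᵒᵖ R) (hIL : I ≤ L)
    (hess : ∀ N : Submodule Rᵐᵒᵖ (R ⧸ I), N ≠ ⊥ → L.map I.mkQ ⊓ N ≠ ⊥)
    (hhom : ∀ N : Submodule Rᵐᵒᵖ (R ⧸ I), N ≤ L.map I.mkQ → N ≠ ⊥ →
      kdim Rᵐᵒᵖ ↥N = α)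
    (hLdim : kdim Rᵐᵒᵖ (R ⧸ L) < α)
    (hLT : mulSpan L T ≤ I) :
    T.rightIdeal ≤ I := by
  by_contra hTI
  have hQdim : kdim Rᵐᵒᵖ (↥T.rightIdeal ⧸ (mulSpan L T).comap T.rightIdeal.subtype) < α :=
    hwii L hLdim
  -- Q is not subsingleton
  have hQns : ¬ Subsingleton (↥T.rightIdeal ⧸ (mulSpan L T).comap T.rightIdeal.subtype) := by
    intro hs
    apply hTI
    have htop : (mulSpan L T).comap T.rightIdeal.subtype = ⊤ :=
      Submodule.Quotient.subsingleton_iff.mp hs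
    intro x hx
    have : (⟨x, hx⟩ : ↥T.rightIdeal) ∈ (mulSpan L T).comap T.rightIdeal.subtype := by
      rw [htop]; trivial
    exact hLT this
  -- the set of Krull bounds for R
  rcases Set.eq_empty_or_nonempty {β : Ordinal.{u} | KdimLE Rᵐᵒᵖ β R} with hSR | hSR
  · by_cases hRs : Subsingleton R
    · have hsub : Subsingleton (↥T.rightIdeal ⧸ (mulSpan L T).comap T.rightIdeal.subtype) := by
        refine Submodule.Quotient.subsingleton_iff.mpr (eq_top_iff.mpr fun x _ => ?_)
        show (x : R) ∈ mulSpan L T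
        rw [Subsingleton.elim (x : R) 0]
        exact zero_mem _
      exact hQns hsub
    · have : α = ((0 : Ordinal.{u}) : WithBot Ordinal.{u}) := by
        rw [← hR, kdim, if_neg hRs, hSR, Ordinal.sInf_empty]
      rw [this, kdim_eq_of_not_subsingleton hQns] at hQdim
      exact not_lt_of_ge (zero_le) (WithBot.coe_lt_coe.mp hQdim)
  · -- transfer Krull bound to Q
    have hKR : KdimLE Rᵐᵒᵖ (sInf {β : Ordinal.{u} | KdimLE Rᵐᵒᵖ β R}) R := csInf_mem hSR
    have hKT : KdimLE Rᵐᵒᵖ _ (↥T.rightIdeal) :=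
      kdimLE_of_injective _ T.rightIdeal.subtype (Submodule.injective_subtype _) hKR
    have hKQ : KdimLE Rᵐᵒᵖ _ (↥T.rightIdeal ⧸ (mulSpan L T).comap T.rightIdeal.subtype) :=
      kdimLE_of_surjective _ (Submodule.mkQ _) (Submodule.mkQ_surjective _) hKT
    set q := sInf {β : Ordinal.{u} | KdimLE Rᵐᵒᵖ β
      (↥T.rightIdeal ⧸ (mulSpan L T).comap T.rightIdeal.subtype)} with hqdef
    have hq : q ∈ {β : Ordinal.{u} | KdimLE Rᵐᵒᵖ β
        (↥T.rightIdeal ⧸ (mulSpan L T).comap T.rightIdeal.subtype)} :=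
      csInf_mem (s := {β : Ordinal.{u} | KdimLE Rᵐᵒᵖ β
        (↥T.rightIdeal ⧸ (mulSpan L T).comap T.rightIdeal.subtype)}) ⟨_, hKQ⟩
    have hqα : (q : WithBot Ordinal.{u}) < α := by
      rwa [kdim_eq_of_not_subsingleton hQns] at hQdim
    -- the image M' of T in R/I
    set M' := T.rightIdeal.map I.mkQ with hM'def
    -- surjection Q → M'
    have hmem : ∀ c : ↥T.rightIdeal, (I.mkQ ∘ₗ T.rightIdeal.subtype) c ∈ M' :=
      fun c => ⟨c.1, c.2, rfl⟩
    set π : ↥T.rightIdeal →ₗ[Rᵐᵒᵖ] ↥M' :=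
      (I.mkQ ∘ₗ T.rightIdeal.subtype).codRestrict M' hmem with hπdef
    have hker : (mulSpan L T).comap T.rightIdeal.subtype ≤ LinearMap.ker π := by
      intro x hx
      have hxI : (x : R) ∈ I := hLT hx
      simp only [LinearMap.mem_ker, hπdef]
      ext
      simpa [Submodule.Quotient.mk_eq_zero] using hxI
    set φQ := Submodule.liftQ _ π hker with hφQdef
    have hφQsurj : Function.Surjective φQ := by
      rintro ⟨y, t, ht, rfl⟩
      exact ⟨Submodule.mkQ _ ⟨t, ht⟩, rfl⟩
    have hKM : KdimLE Rᵐᵒᵖ q ↥M' := kdimLE_of_surjective q φQ hφQsurj hq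
    -- the nonzero submodule N of L/I
    have hM'ne : M' ≠ ⊥ := by
      obtain ⟨t, ht, htI⟩ := SetLike.not_le_iff_exists.mp hTI
      refine Submodule.ne_bot_iff _ |>.mpr ⟨I.mkQ t, ⟨t, ht, rfl⟩, ?_⟩
      simpa [Submodule.Quotient.mk_eq_zero] using htI
    have hNne : L.map I.mkQ ⊓ M' ≠ ⊥ := hess M' hM'ne
    have hNd : kdim Rᵐᵒᵖ ↥(L.map I.mkQ ⊓ M') = α := hhom _ inf_le_left hNne
    have hKN : KdimLE Rᵐᵒᵖ q ↥(L.map I.mkQ ⊓ M') :=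
      kdimLE_of_injective q (Submodule.inclusion inf_le_right)
        (Submodule.inclusion_injective _) hKM
    have hNns : ¬ Subsingleton ↥(L.map I.mkQ ⊓ M') := by
      have := Submodule.nontrivial_iff_ne_bot.mpr hNne
      exact fun h => (not_subsingleton_iff_nontrivial.mpr this) h
    have : α ≤ (q : WithBot Ordinal.{u}) := by
      rw [← hNd, kdim_eq_of_not_subsingleton hNns]
      exact_mod_cast csInf_le (OrderBot.bddBelow _)
        (show q ∈ {β : Ordinal.{u} | KdimLE Rᵐᵒᵖ β ↥(L.map I.mkQ ⊓ M')} from hKN)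
    exact absurd (lt_of_le_of_lt this hqα) (lt_irrefl _)
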